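/- Let d ≥ 3 and let μ be the Bernoulli measure on X^ℕ. For every ξ ∈ X^ℕ, the set D = {η ∈ X^ℕ : there exists η' cofinal with η such that ξ ∼ η'} is a μ-null set. -/

import Mathlib

open MeasureTheory

noncomputable section

/-- The boundary of the `d`-regular rooted tree: infinite words over `X = {0,…,d-1}`,
identified with `ZMod d`. -/
abbrev Bd (d : ℕ) : Type := ℕ → ZMod d
instance (d : ℕ) : MeasurableSpace (ZMod d) := ⊤
/-- Two boundary points are cofinal if they agree at all sufficiently large positions. -/
def Cofinal {d : ℕ} (ξ η : Bd d) : Prop := ∃ N, ∀ n, N ≤ n → ξ n = η n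

/-- The cofinality class of `ξ`. -/
def Cof {d : ℕ} (ξ : Bd d) : Set (Bd d) := {η | Cofinal ξ η}

theorem self_mem_Cof {d : ℕ} (ξ : Bd d) : ξ ∈ Cof ξ := ⟨0, fun _ _ => rfl⟩
/-- `ξ` has at least `r` consecutive letters `d-1` immediately before position `p`
(i.e. the block of `ξ` preceding position `p` ends in `(d-1)^r`). -/
def EndsIn (d : ℕ) (ξ : Bd d) (p r : ℕ) : Prop :=
  r ≤ p ∧ ∀ i, p - r ≤ i → i < p → ξ i = (d : ZMod d) - 1

/-- Compatibility `ξ ∼ η`: zeros at exactly the same positions, and before each zero the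
maximal runs of the letter `d-1` have the same length (equivalently, the corresponding
finite blocks end in `(d-1)^r` for exactly the same `r`'s). -/
def Compatible (d : ℕ) (ξ η : Bd d) : Prop :=
  (∀ n, ξ n = 0 ↔ η n = 0) ∧
  ∀ p, ξ p = 0 → ∀ r, (EndsIn d ξ p r ↔ EndsIn d η p r)

/-- for `d ≥ 3` and the Bernoulli measure `μ` on `X^ℕ`, the set of points
`η` admitting some `η'` cofinal with `η` such that `ξ ∼ η'` is a null set. -/
theorem eventual_compatibility_class_null (d : ℕ) (hd : 3 ≤ d) (μ : Measure (Bd d))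
    (hμ : ∀ (n : ℕ) (w : Fin n → ZMod d),
      μ {ξ : Bd d | ∀ i : Fin n, ξ (i : ℕ) = w i} = (1 / (d : ENNReal)) ^ n)
    (ξ : Bd d) :
    μ {η : Bd d | ∃ η', Cofinal η η' ∧ Compatible d ξ η'} = 0 := by
  haveI : NeZero d := ⟨by omega⟩
  set A : ℕ → Set (Bd d) := fun N => {η | ∀ n, N ≤ n → (η n = 0 ↔ ξ n = 0)} with hA
  have hsub : {η : Bd d | ∃ η', Cofinal η η' ∧ Compatible d ξ η'} ⊆ ⋃ N, A N := by
    rintro η ⟨η', ⟨K, hK⟩, hcz, -⟩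
    exact Set.mem_iUnion.2 ⟨K, fun n hn => by rw [hK n hn]; exact (hcz n).symm⟩
  refine measure_mono_null hsub (measure_iUnion_null fun N => ?_)
  -- bound μ (A N) by ((d-1)/d)^k for every k
  have key : ∀ k : ℕ, μ (A N) ≤ (((d - 1 : ℕ) : ENNReal) / d) ^ k := by
    intro k
    set M := N + k with hM
    set t : Fin M → Finset (ZMod d) := fun i =>
      if N ≤ (i : ℕ) then Finset.univ.filter (fun x => x = 0 ↔ ξ (i : ℕ) = 0)
      else Finset.univ with ht
    set W : Finset (Fin M → ZMod d) := Fintype.piFinset t with hW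
    have hcover : A N ⊆ ⋃ w ∈ W, {η : Bd d | ∀ i : Fin M, η (i : ℕ) = w i} := by
      intro η hη
      have hmem : (fun i : Fin M => η (i : ℕ)) ∈ W := by
        rw [hW, Fintype.mem_piFinset]
        intro i
        rw [ht]
        by_cases hi : N ≤ (i : ℕ)
        · simp only [hi, if_pos, Finset.mem_filter, Finset.mem_univ, true_and]
          exact hη (i : ℕ) hi
        · simp [hi]
      exact Set.mem_iUnion₂.2 ⟨_, hmem, fun i => rfl⟩
    have hμA : μ (A N) ≤ (W.card : ENNReal) * (1 / (d : ENNReal)) ^ M := by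
      calc μ (A N) ≤ μ (⋃ w ∈ W, {η : Bd d | ∀ i : Fin M, η (i : ℕ) = w i}) :=
            measure_mono hcover
        _ ≤ ∑ w ∈ W, μ {η : Bd d | ∀ i : Fin M, η (i : ℕ) = w i} :=
            measure_biUnion_finset_le W _
        _ = ∑ w ∈ W, (1 / (d : ENNReal)) ^ M := by
            exact Finset.sum_congr rfl fun w _ => hμ M w
        _ = (W.card : ENNReal) * (1 / (d : ENNReal)) ^ M := by
            rw [Finset.sum_const, nsmul_eq_mul]
    have hcard : W.card ≤ d ^ N * (d - 1) ^ k := by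
      have hcards : ∀ i : Fin M, (t i).card ≤ if N ≤ (i : ℕ) then d - 1 else d := by
        intro i
        rw [ht]
        by_cases hi : N ≤ (i : ℕ)
        · simp only [hi, if_pos]
          by_cases hξ : ξ (i : ℕ) = 0
          · have hsub1 : Finset.univ.filter (fun x : ZMod d => x = 0 ↔ ξ (i : ℕ) = 0)
                ⊆ Finset.univ.erase (1 : ZMod d) := by
              intro x hx
              rw [Finset.mem_filter] at hx
              refine Finset.mem_erase.2 ⟨?_, Finset.mem_univ x⟩
              have hx0 : x = 0 := hx.2.mpr hξ
              rw [hx0]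
              intro h
              have : ((1 : ℕ) : ZMod d) = 0 := by exact_mod_cast h.symm
              have := Nat.dvd_one.mp ((ZMod.natCast_eq_zero_iff 1 d).mp this)
              omega
            calc (Finset.univ.filter (fun x : ZMod d => x = 0 ↔ ξ (i : ℕ) = 0)).card
                ≤ (Finset.univ.erase (1 : ZMod d)).card := Finset.card_le_card hsub1
              _ = d - 1 := by
                  rw [Finset.card_erase_of_mem (Finset.mem_univ _), Finset.card_univ,
                    ZMod.card]
          · have hsub0 : Finset.univ.filter (fun x : ZMod d => x = 0 ↔ ξ (i : ℕ) = 0)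
                ⊆ Finset.univ.erase (0 : ZMod d) := by
              intro x hx
              rw [Finset.mem_filter] at hx
              refine Finset.mem_erase.2 ⟨?_, Finset.mem_univ x⟩
              intro h
              exact hξ (hx.2.mp h)
            calc (Finset.univ.filter (fun x : ZMod d => x = 0 ↔ ξ (i : ℕ) = 0)).card
                ≤ (Finset.univ.erase (0 : ZMod d)).card := Finset.card_le_card hsub0
              _ = d - 1 := by
                  rw [Finset.card_erase_of_mem (Finset.mem_univ _), Finset.card_univ,
                    ZMod.card]
        · simp only [hi, if_neg, not_false_iff]
          calc (Finset.univ : Finset (ZMod d)).card = d := by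
                rw [Finset.card_univ, ZMod.card]
            _ ≤ d := le_refl d
      have : W.card = ∏ i : Fin M, (t i).card := by
        rw [hW, Fintype.card_piFinset]
      rw [this]
      calc ∏ i : Fin M, (t i).card
          ≤ ∏ i : Fin M, (if N ≤ (i : ℕ) then d - 1 else d) :=
            Finset.prod_le_prod' fun i _ => hcards i
        _ = ∏ i ∈ Finset.range M, (if N ≤ i then d - 1 else d) := by
            rw [Finset.prod_range fun i => if N ≤ i then d - 1 else d]
        _ = (∏ i ∈ Finset.range N, (if N ≤ i then d - 1 else d)) *
            ∏ i ∈ Finset.range k, (if N ≤ N + i then d - 1 else d) := by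
            rw [hM, Finset.prod_range_add]
        _ = (∏ i ∈ Finset.range N, d) * ∏ i ∈ Finset.range k, (d - 1) := by
            congr 1
            · exact Finset.prod_congr rfl fun i hi => by
                rw [if_neg (by exact Nat.not_le.2 (Finset.mem_range.1 hi))]
            · exact Finset.prod_congr rfl fun i _ => by
                rw [if_pos (Nat.le_add_right N i)]
        _ = d ^ N * (d - 1) ^ k := by
            rw [Finset.prod_const, Finset.prod_const, Finset.card_range, Finset.card_range]
    -- now the arithmetic in ENNReal
    have hd0 : (d : ENNReal) ≠ 0 := by
      simpa using (by omega : d ≠ 0)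
    have hdt : (d : ENNReal) ≠ ⊤ := ENNReal.natCast_ne_top d
    calc μ (A N) ≤ (W.card : ENNReal) * (1 / (d : ENNReal)) ^ M := hμA
      _ ≤ ((d ^ N * (d - 1) ^ k : ℕ) : ENNReal) * (1 / (d : ENNReal)) ^ M := by
          exact mul_le_mul_of_nonneg_right (Nat.cast_le.mpr hcard) zero_le
      _ = ((d : ENNReal) ^ N * ((d - 1 : ℕ) : ENNReal) ^ k) *
          ((1 / (d : ENNReal)) ^ N * (1 / (d : ENNReal)) ^ k) := by
          rw [hM, pow_add, Nat.cast_mul, Nat.cast_pow, Nat.cast_pow]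
      _ = ((d : ENNReal) * (1 / (d : ENNReal))) ^ N *
          (((d - 1 : ℕ) : ENNReal) * (1 / (d : ENNReal))) ^ k := by
          rw [mul_pow, mul_pow]; ring
      _ = (((d - 1 : ℕ) : ENNReal) / d) ^ k := by
          rw [one_div, ENNReal.mul_inv_cancel hd0 hdt, one_pow, one_mul,
            div_eq_mul_inv]
  have hr : (((d - 1 : ℕ) : ENNReal) / d) < 1 := by
    rw [ENNReal.div_lt_iff (Or.inl (by simpa using (by omega : d ≠ 0)))
      (Or.inl (ENNReal.natCast_ne_top d)), one_mul]
    exact_mod_cast (by omega : d - 1 < d)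
  have htnd := ENNReal.tendsto_pow_atTop_nhds_zero_of_lt_one hr
  exact le_antisymm (ge_of_tendsto' htnd key) zero_le

end
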